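/- arXiv:1006.1845 — 2 statements merged into one kernel-verified Lean document; each statement's English description precedes it below -/
import Mathlib

section
/- Let n ≥ 1 and let f, g ∈ L¹(ℝⁿ; ℂ) be compactly supported and not almost everywhere zero. Then the convolution f * g is not almost everywhere zero. -/
set_option maxHeartbeats 1000000
open MeasureTheory FourierTransform Complex Metric Filter
open scoped RealInnerProductSpace Real Convolution

namespace ConvAux

variable {n : ℕ}

local notation "V" n => EuclideanSpace ℝ (Fin n)

/-- A smooth compactly supported function is a Schwartz map. -/
noncomputable def toSchwartz (g : EuclideanSpace ℝ (Fin n) → ℂ)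
    (hsmooth : ContDiff ℝ (⊤ : ℕ∞) g) (hsupp : HasCompactSupport g) :
    SchwartzMap (EuclideanSpace ℝ (Fin n)) ℂ where
  toFun := g
  smooth' := hsmooth
  decay' := by
    intro k m
    have hcont : Continuous fun x : EuclideanSpace ℝ (Fin n) =>
        ‖x‖ ^ k * ‖iteratedFDeriv ℝ m g x‖ := by
      refine ((continuous_norm.pow k).mul (Continuous.norm ?_))
      exact (hsmooth.continuous_iteratedFDeriv (mod_cast le_top))
    have hs : HasCompactSupport fun x : EuclideanSpace ℝ (Fin n) =>
        ‖x‖ ^ k * ‖iteratedFDeriv ℝ m g x‖ := by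
      have h1 : HasCompactSupport fun x : EuclideanSpace ℝ (Fin n) =>
          ‖iteratedFDeriv ℝ m g x‖ := (hsupp.iteratedFDeriv m).norm
      exact h1.mul_left
    obtain ⟨C, hC⟩ := hs.exists_bound_of_continuous hcont
    exact ⟨C, fun x => (le_abs_self _).trans ((Real.norm_eq_abs _ ▸ hC x : |‖x‖ ^ k * ‖iteratedFDeriv ℝ m g x‖| ≤ C))⟩

/-- Injectivity of the Fourier transform on L¹. -/
theorem ae_zero_of_fourier_zero (f : EuclideanSpace ℝ (Fin n) → ℂ)
    (hf : Integrable f) (h : ∀ ξ, 𝓕 f ξ = 0) : f =ᵐ[volume] 0 := by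
  apply ae_eq_zero_of_integral_contDiff_smul_eq_zero hf.locallyIntegrable
  intro φ hφsmooth hφsupp
  have hsm : ContDiff ℝ (⊤ : ℕ∞) (fun x : EuclideanSpace ℝ (Fin n) => (φ x : ℂ)) :=
    Complex.ofRealCLM.contDiff.comp hφsmooth
  have hsp : HasCompactSupport (fun x : EuclideanSpace ℝ (Fin n) => (φ x : ℂ)) :=
    hφsupp.comp_left (g := fun r : ℝ => (r : ℂ)) (by simp)
  set Φ : SchwartzMap (EuclideanSpace ℝ (Fin n)) ℂ := toSchwartz _ hsm hsp with hΦ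
  set Ψ : SchwartzMap (EuclideanSpace ℝ (Fin n)) ℂ :=
    (FourierTransform.fourierCLE ℂ (SchwartzMap (EuclideanSpace ℝ (Fin n)) ℂ)).symm Φ with hΨ
  have hΨΦ : 𝓕 (⇑Ψ) = ⇑Φ := by
    have := (FourierTransform.fourierCLE ℂ (SchwartzMap (EuclideanSpace ℝ (Fin n)) ℂ)).apply_symm_apply Φ
    rw [← this, FourierTransform.fourierCLE_apply]
    rfl
  have flipEq : ∫ ξ, (𝓕 (⇑Ψ)) ξ • f ξ = ∫ x, Ψ x • (𝓕 f) x := by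
    have := VectorFourier.integral_fourierIntegral_smul_eq_flip
      (L := innerₗ (EuclideanSpace ℝ (Fin n))) (μ := volume) (ν := volume)
      Real.continuous_fourierChar continuous_inner Ψ.integrable hf
    rw [flip_innerₗ] at this
    exact this
  have : ∫ x, φ x • f x = ∫ ξ, (𝓕 (⇑Ψ)) ξ • f ξ := by
    rw [hΨΦ]
    congr 1 with x
  rw [this, flipEq]
  simp [h]

/-- The Fourier kernel. -/
noncomputable def kern (ξ x : EuclideanSpace ℝ (Fin n)) : ℂ :=
  Complex.exp ((↑(-2 * π * ⟪x, ξ⟫) : ℂ) * Complex.I)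

lemma kern_norm (ξ x : EuclideanSpace ℝ (Fin n)) : ‖kern ξ x‖ = 1 :=
  Complex.norm_exp_ofReal_mul_I _

lemma kern_add (ξ x y : EuclideanSpace ℝ (Fin n)) :
    kern ξ (x + y) = kern ξ x * kern ξ y := by
  unfold kern
  rw [← Complex.exp_add]
  congr 1
  rw [← add_mul]
  congr 1
  rw [← Complex.ofReal_add]
  congr 1
  rw [inner_add_left]
  ring

lemma kern_continuous (ξ : EuclideanSpace ℝ (Fin n)) : Continuous (kern ξ) := by
  unfold kern
  apply Complex.continuous_exp.comp
  apply Continuous.mul _ continuous_const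
  have : Continuous fun t : EuclideanSpace ℝ (Fin n) => -2 * π * ⟪t, ξ⟫ :=
    continuous_const.mul (continuous_id.inner continuous_const)
  exact Complex.continuous_ofReal.comp this

lemma fourier_eq_kern (f : EuclideanSpace ℝ (Fin n) → ℂ) (ξ : EuclideanSpace ℝ (Fin n)) :
    𝓕 f ξ = ∫ t, kern ξ t * f t := by
  rw [Real.fourier_eq']
  simp only [smul_eq_mul, kern]

/-- Convolution theorem. -/
theorem fourier_conv (f g : EuclideanSpace ℝ (Fin n) → ℂ)
    (hf : Integrable f) (hg : Integrable g) (ξ : EuclideanSpace ℝ (Fin n)) :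
    𝓕 (f ⋆[ContinuousLinearMap.mul ℂ ℂ] g) ξ = 𝓕 f ξ * 𝓕 g ξ := by
  have Iconv : Integrable (fun p : (EuclideanSpace ℝ (Fin n)) × (EuclideanSpace ℝ (Fin n)) =>
      f p.2 * g (p.1 - p.2)) (volume.prod volume) := by
    have := hf.convolution_integrand (ContinuousLinearMap.mul ℂ ℂ) hg
    simpa using this
  have Imain : Integrable (fun p : (EuclideanSpace ℝ (Fin n)) × (EuclideanSpace ℝ (Fin n)) =>
      kern ξ p.1 * (f p.2 * g (p.1 - p.2))) (volume.prod volume) := by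
    apply Iconv.bdd_mul (c := 1)
    · exact ((kern_continuous ξ).comp continuous_fst).aestronglyMeasurable
    · exact Filter.Eventually.of_forall fun p => le_of_eq (kern_norm ξ p.1)
  calc 𝓕 (f ⋆[ContinuousLinearMap.mul ℂ ℂ] g) ξ
      = ∫ x, kern ξ x * ∫ t, f t * g (x - t) := by
        rw [fourier_eq_kern]
        rfl
    _ = ∫ x, ∫ t, kern ξ x * (f t * g (x - t)) := by
        congr 1 with x
        rw [integral_const_mul]
    _ = ∫ t, ∫ x, kern ξ x * (f t * g (x - t)) := integral_integral_swap Imain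
    _ = ∫ t, f t * (kern ξ t * 𝓕 g ξ) := by
        congr 1 with t
        have subst : ∫ x, kern ξ x * (f t * g (x - t))
            = ∫ x, kern ξ (x + t) * (f t * g x) := by
          rw [← integral_add_right_eq_self (fun x => kern ξ x * (f t * g (x - t))) t]
          simp
        rw [subst, fourier_eq_kern]
        have hx : ∀ x, kern ξ (x + t) * (f t * g x)
            = f t * (kern ξ t * (kern ξ x * g x)) := by
          intro x; rw [kern_add]; ring
        simp only [hx]
        rw [integral_const_mul, integral_const_mul]
    _ = (∫ t, kern ξ t * f t) * 𝓕 g ξ := by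
        rw [← integral_mul_const]
        congr 1 with t
        ring
    _ = 𝓕 f ξ * 𝓕 g ξ := by rw [← fourier_eq_kern f ξ]

/-- The phase function. -/
noncomputable def ph (w t : EuclideanSpace ℝ (Fin n)) : ℂ :=
  (↑(-2 * π * ⟪t, w⟫) : ℂ) * Complex.I

lemma ph_re (w t : EuclideanSpace ℝ (Fin n)) : (ph w t).re = 0 := by
  simp [ph]

lemma ph_norm_le (w t : EuclideanSpace ℝ (Fin n)) : ‖ph w t‖ ≤ 2 * π * ‖t‖ * ‖w‖ := by
  unfold ph
  rw [norm_mul, Complex.norm_I, mul_one, Complex.norm_real, Real.norm_eq_abs]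
  have h1 : |(-2) * π * ⟪t, w⟫| = 2 * π * |⟪t, w⟫| := by
    rw [abs_mul, abs_mul, abs_neg, _root_.abs_two, _root_.abs_of_nonneg Real.pi_pos.le]
  rw [h1]
  have := abs_real_inner_le_norm t w
  have hπ : (0:ℝ) < 2 * π := by positivity
  nlinarith [mul_le_mul_of_nonneg_left this hπ.le]

lemma ph_continuous (w : EuclideanSpace ℝ (Fin n)) : Continuous (ph w) := by
  unfold ph
  apply Continuous.mul _ continuous_const
  exact Complex.continuous_ofReal.comp
    (continuous_const.mul (continuous_id.inner continuous_const))

lemma kern_eq_exp_ph (w t : EuclideanSpace ℝ (Fin n)) :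
    kern w t = Complex.exp (ph w t) := rfl

/-- Restriction of the Fourier transform of `g` to a complex line. -/
noncomputable def lineH (g : EuclideanSpace ℝ (Fin n) → ℂ)
    (ξ0 v : EuclideanSpace ℝ (Fin n)) (z : ℂ) : ℂ :=
  ∫ t, g t * Complex.exp (ph ξ0 t + z * ph v t)

lemma lineH_real (g : EuclideanSpace ℝ (Fin n) → ℂ)
    (ξ0 v : EuclideanSpace ℝ (Fin n)) (s : ℝ) :
    lineH g ξ0 v (s : ℂ) = 𝓕 g (ξ0 + s • v) := by
  rw [fourier_eq_kern]
  unfold lineH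
  congr 1 with t
  rw [kern_eq_exp_ph, mul_comm]
  congr 2
  unfold ph
  have : ⟪t, ξ0 + s • v⟫ = ⟪t, ξ0⟫ + s * ⟪t, v⟫ := by
    rw [inner_add_right, real_inner_smul_right]
  rw [this]
  push_cast
  ring

lemma norm_exp_ph_le (ξ0 v : EuclideanSpace ℝ (Fin n)) (z : ℂ)
    (t : EuclideanSpace ℝ (Fin n)) :
    ‖Complex.exp (ph ξ0 t + z * ph v t)‖ ≤ Real.exp (‖z‖ * (2 * π * ‖t‖ * ‖v‖)) := by
  rw [Complex.norm_exp]
  apply Real.exp_le_exp.2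
  rw [Complex.add_re, ph_re, zero_add]
  calc (z * ph v t).re ≤ |(z * ph v t).re| := le_abs_self _
    _ ≤ ‖z * ph v t‖ := Complex.abs_re_le_norm _
    _ = ‖z‖ * ‖ph v t‖ := norm_mul _ _
    _ ≤ ‖z‖ * (2 * π * ‖t‖ * ‖v‖) := by
        exact mul_le_mul_of_nonneg_left (ph_norm_le v t) (norm_nonneg z)

lemma lineH_differentiable (g : EuclideanSpace ℝ (Fin n) → ℂ)
    (hg : Integrable g) {R : ℝ} (hR : 0 ≤ R)
    (hsupp : ∀ x, x ∉ Metric.closedBall (0 : EuclideanSpace ℝ (Fin n)) R → g x = 0)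
    (ξ0 v : EuclideanSpace ℝ (Fin n)) :
    Differentiable ℂ (lineH g ξ0 v) := by
  intro z0
  set M : ℝ := 2 * π * R * ‖v‖ with hM
  have hM0 : 0 ≤ M := by positivity
  -- bounds on the phase for points in the support
  have hphle : ∀ t : EuclideanSpace ℝ (Fin n), g t ≠ 0 → ‖ph v t‖ ≤ M := by
    intro t ht
    have htR : ‖t‖ ≤ R := by
      by_contra hc
      exact ht (hsupp t (fun hmem => hc (by simpa using Metric.mem_closedBall.1 hmem)))
    refine (ph_norm_le v t).trans ?_
    rw [hM]
    have : 2 * π * ‖t‖ * ‖v‖ ≤ 2 * π * R * ‖v‖ := by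
      apply mul_le_mul_of_nonneg_right _ (norm_nonneg v)
      have : (0:ℝ) < 2 * π := by positivity
      nlinarith
    exact this
  have hexple : ∀ (z : ℂ) (t : EuclideanSpace ℝ (Fin n)), g t ≠ 0 →
      ‖Complex.exp (ph ξ0 t + z * ph v t)‖ ≤ Real.exp (‖z‖ * M) := by
    intro z t ht
    rw [Complex.norm_exp]
    apply Real.exp_le_exp.2
    rw [Complex.add_re, ph_re, zero_add]
    calc (z * ph v t).re ≤ |(z * ph v t).re| := le_abs_self _
      _ ≤ ‖z * ph v t‖ := Complex.abs_re_le_norm _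
      _ = ‖z‖ * ‖ph v t‖ := norm_mul _ _
      _ ≤ ‖z‖ * M := mul_le_mul_of_nonneg_left (hphle t ht) (norm_nonneg z)
  have hmeas : ∀ z : ℂ, AEStronglyMeasurable
      (fun t => g t * Complex.exp (ph ξ0 t + z * ph v t)) volume := by
    intro z
    exact hg.1.mul (((ph_continuous ξ0).add
      (continuous_const.mul (ph_continuous v))).cexp.aestronglyMeasurable)
  have hmeas' : AEStronglyMeasurable
      (fun t => g t * (Complex.exp (ph ξ0 t + z0 * ph v t) * ph v t)) volume := by
    exact hg.1.mul ((((ph_continuous ξ0).add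
      (continuous_const.mul (ph_continuous v))).cexp.mul (ph_continuous v)).aestronglyMeasurable)
  have hint : Integrable (fun t => g t * Complex.exp (ph ξ0 t + z0 * ph v t)) volume := by
    apply Integrable.mono' (hg.norm.const_mul (Real.exp (‖z0‖ * M))) (hmeas z0)
    filter_upwards with t
    rw [norm_mul]
    by_cases ht : g t = 0
    · simp [ht]
    · calc ‖g t‖ * ‖Complex.exp (ph ξ0 t + z0 * ph v t)‖
          ≤ ‖g t‖ * Real.exp (‖z0‖ * M) :=
            mul_le_mul_of_nonneg_left (hexple z0 t ht) (norm_nonneg _)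
        _ = Real.exp (‖z0‖ * M) * ‖g t‖ := mul_comm _ _
  have key := hasDerivAt_integral_of_dominated_loc_of_deriv_le (μ := volume)
    (F := fun z t => g t * Complex.exp (ph ξ0 t + z * ph v t))
    (F' := fun z t => g t * (Complex.exp (ph ξ0 t + z * ph v t) * ph v t))
    (x₀ := z0) (s := Metric.ball z0 1) (bound := fun t => ‖g t‖ * (M * Real.exp ((‖z0‖ + 1) * M)))
    (Metric.ball_mem_nhds z0 one_pos)
    (Filter.Eventually.of_forall fun z => hmeas z)
    hint
    hmeas'
    ?_ ((hg.norm.mul_const _))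
    ?_
  · exact key.2.differentiableAt
  · -- bound on the derivative on the ball
    filter_upwards with t
    intro z hz
    by_cases ht : g t = 0
    · simp only [ht, norm_zero, zero_mul, norm_mul]
      positivity
    · have hz' : ‖z‖ ≤ ‖z0‖ + 1 := by
        have : ‖z - z0‖ < 1 := by simpa [dist_eq_norm] using Metric.mem_ball.1 hz
        calc ‖z‖ = ‖z0 + (z - z0)‖ := by ring_nf
          _ ≤ ‖z0‖ + ‖z - z0‖ := norm_add_le _ _
          _ ≤ ‖z0‖ + 1 := by linarith
      rw [norm_mul, norm_mul]
      apply mul_le_mul_of_nonneg_left _ (norm_nonneg (g t))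
      calc ‖Complex.exp (ph ξ0 t + z * ph v t)‖ * ‖ph v t‖
          ≤ Real.exp (‖z‖ * M) * M := by
            apply mul_le_mul (hexple z t ht) (hphle t ht) (norm_nonneg _)
              (Real.exp_nonneg _)
        _ ≤ Real.exp ((‖z0‖ + 1) * M) * M := by
            apply mul_le_mul_of_nonneg_right _ hM0
            exact Real.exp_le_exp.2 (mul_le_mul_of_nonneg_right hz' hM0)
        _ = M * Real.exp ((‖z0‖ + 1) * M) := mul_comm _ _
  · -- differentiability of the integrand
    filter_upwards with t
    intro z hz
    have h1 : HasDerivAt (fun z : ℂ => ph ξ0 t + z * ph v t) (ph v t) z := by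
      simpa using ((hasDerivAt_id z).mul_const (ph v t)).const_add (ph ξ0 t)
    exact h1.cexp.const_mul (g t)

/-- Analytic continuation along lines. -/
theorem fourier_eq_zero_of_ball (g : EuclideanSpace ℝ (Fin n) → ℂ)
    (hg : Integrable g) {R : ℝ} (hR : 0 ≤ R)
    (hsupp : ∀ x, x ∉ Metric.closedBall (0 : EuclideanSpace ℝ (Fin n)) R → g x = 0)
    {ξ0 : EuclideanSpace ℝ (Fin n)} {ε : ℝ} (hε : 0 < ε)
    (hzero : ∀ ξ ∈ Metric.ball ξ0 ε, 𝓕 g ξ = 0) (ξ : EuclideanSpace ℝ (Fin n)) :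
    𝓕 g ξ = 0 := by
  set v : EuclideanSpace ℝ (Fin n) := ξ - ξ0 with hv
  have hdiff : Differentiable ℂ (lineH g ξ0 v) :=
    lineH_differentiable g hg hR hsupp ξ0 v
  have hanal : AnalyticOnNhd ℂ (lineH g ξ0 v) Set.univ :=
    hdiff.differentiableOn.analyticOnNhd isOpen_univ
  have hfreq : ∃ᶠ z in nhdsWithin (0 : ℂ) {(0:ℂ)}ᶜ, lineH g ξ0 v z = 0 := by
    rw [Filter.frequently_iff]
    intro U hU
    rcases Metric.mem_nhdsWithin_iff.1 hU with ⟨δ, hδ, hball⟩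
    set s : ℝ := min (δ / 2) (ε / (2 * (‖v‖ + 1))) with hs
    have hv1 : (0:ℝ) < ‖v‖ + 1 := by positivity
    have hs0 : 0 < s := by
      apply lt_min (by linarith)
      positivity
    refine ⟨(s : ℂ), hball ⟨?_, ?_⟩, ?_⟩
    · rw [Metric.mem_ball, dist_zero_right, Complex.norm_real, Real.norm_eq_abs,
        abs_of_pos hs0]
      calc s ≤ δ / 2 := min_le_left _ _
        _ < δ := by linarith
    · simp only [Set.mem_compl_iff, Set.mem_singleton_iff]
      exact_mod_cast hs0.ne'
    · rw [lineH_real]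
      apply hzero
      rw [Metric.mem_ball]
      have : dist (ξ0 + s • v) ξ0 = s * ‖v‖ := by
        rw [dist_eq_norm]
        simp [norm_smul, abs_of_pos hs0]
      rw [this]
      have h2 : s ≤ ε / (2 * (‖v‖ + 1)) := min_le_right _ _
      have h3 : s * ‖v‖ ≤ (ε / (2 * (‖v‖ + 1))) * (‖v‖ + 1) := by
        apply mul_le_mul h2 (by linarith) (norm_nonneg _) (by positivity)
      have h4 : (ε / (2 * (‖v‖ + 1))) * (‖v‖ + 1) = ε / 2 := by
        field_simp
      calc s * ‖v‖ ≤ ε / 2 := h4 ▸ h3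
        _ < ε := by linarith
  have hzero' := hanal.eqOn_zero_of_preconnected_of_frequently_eq_zero
    isPreconnected_univ (Set.mem_univ (0:ℂ)) hfreq
  have h1 : lineH g ξ0 v ((1:ℝ) : ℂ) = 0 := hzero' (Set.mem_univ _)
  rw [lineH_real] at h1
  simpa [hv] using h1

lemma fourier_congr_ae {f f' : EuclideanSpace ℝ (Fin n) → ℂ}
    (h : f =ᵐ[volume] f') (ξ : EuclideanSpace ℝ (Fin n)) : 𝓕 f ξ = 𝓕 f' ξ := by
  rw [fourier_eq_kern, fourier_eq_kern]
  apply integral_congr_ae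
  filter_upwards [h] with t ht
  rw [ht]

/-- Master lemma on Euclidean space. -/
theorem master (f g : EuclideanSpace ℝ (Fin n) → ℂ)
    (hf : Integrable f) (hg : Integrable g)
    (hgc : ∃ K : Set (EuclideanSpace ℝ (Fin n)), IsCompact K ∧
      ∀ᵐ x ∂(volume), x ∉ K → g x = 0)
    (hf0 : ¬ f =ᵐ[volume] 0) (hg0 : ¬ g =ᵐ[volume] 0)
    (hconv : (f ⋆[ContinuousLinearMap.mul ℂ ℂ] g) =ᵐ[volume] 0) : False := by
  have hFconv : ∀ ξ, 𝓕 (f ⋆[ContinuousLinearMap.mul ℂ ℂ] g) ξ = 0 := by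
    intro ξ
    rw [fourier_congr_ae hconv]
    rw [fourier_eq_kern]
    simp
  have hprod : ∀ ξ, 𝓕 f ξ * 𝓕 g ξ = 0 := fun ξ => by
    rw [← fourier_conv f g hf hg ξ]; exact hFconv ξ
  have hfF : ¬ ∀ ξ, 𝓕 f ξ = 0 := fun h => hf0 (ae_zero_of_fourier_zero f hf h)
  push_neg at hfF
  obtain ⟨ξ0, hξ0⟩ := hfF
  have hcont : Continuous (𝓕 f) :=
    VectorFourier.fourierIntegral_continuous Real.continuous_fourierChar continuous_inner hf
  have hopen : IsOpen {ξ : EuclideanSpace ℝ (Fin n) | 𝓕 f ξ ≠ 0} :=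
    isOpen_compl_singleton.preimage hcont
  obtain ⟨ε, hε, hball⟩ := Metric.isOpen_iff.1 hopen ξ0 hξ0
  have hgball : ∀ ξ ∈ Metric.ball ξ0 ε, 𝓕 g ξ = 0 := by
    intro ξ hξ
    rcases mul_eq_zero.1 (hprod ξ) with h | h
    · exact absurd h (hball hξ)
    · exact h
  obtain ⟨K, hK, hKae⟩ := hgc
  obtain ⟨R0, hR0⟩ := hK.isBounded.subset_closedBall (0 : EuclideanSpace ℝ (Fin n))
  set R : ℝ := max R0 0 with hRdef
  have hKR : K ⊆ Metric.closedBall (0 : EuclideanSpace ℝ (Fin n)) R :=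
    hR0.trans (Metric.closedBall_subset_closedBall (le_max_left _ _))
  set g' : EuclideanSpace ℝ (Fin n) → ℂ :=
    Set.indicator (Metric.closedBall (0 : EuclideanSpace ℝ (Fin n)) R) g with hg'def
  have hgg' : g =ᵐ[volume] g' := by
    filter_upwards [hKae] with x hx
    by_cases hxB : x ∈ Metric.closedBall (0 : EuclideanSpace ℝ (Fin n)) R
    · rw [hg'def, Set.indicator_of_mem hxB]
    · rw [hg'def, Set.indicator_of_notMem hxB]
      exact hx (fun hxK => hxB (hKR hxK))
  have hg' : Integrable g' := hg.congr hgg'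
  have hFg'g : ∀ ξ, 𝓕 g' ξ = 𝓕 g ξ := fun ξ => fourier_congr_ae hgg'.symm ξ
  have hallzero : ∀ ξ, 𝓕 g ξ = 0 := by
    intro ξ
    rw [← hFg'g]
    apply fourier_eq_zero_of_ball g' hg' (le_max_right R0 0)
      (fun x hx => Set.indicator_of_notMem hx g) hε
      (fun ζ hζ => by rw [hFg'g]; exact hgball ζ hζ) ξ
  exact hg0 (ae_zero_of_fourier_zero g hg hallzero)

end ConvAux

open MeasureTheory

/-- The convolution of two integrable functions on `ℝⁿ`. -/
noncomputable def conv {n : ℕ} (f g : (Fin n → ℝ) → ℂ) : (Fin n → ℝ) → ℂ :=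
  fun x => ∫ t, f t * g (x - t)

/-- A function vanishes almost everywhere outside some compact set. -/
def AECompactlySupported {n : ℕ} (f : (Fin n → ℝ) → ℂ) : Prop :=
  ∃ K : Set (Fin n → ℝ), IsCompact K ∧ ∀ᵐ x ∂(volume), x ∉ K → f x = 0

/-- If `f, g ∈ L¹(ℝⁿ)` are compactly supported and not a.e. zero, then `f * g` is
not a.e. zero. -/
theorem convolution_ne_zero_of_compactly_supported
    (n : ℕ) (hn : 1 ≤ n) (f g : (Fin n → ℝ) → ℂ)
    (hf : Integrable f) (hg : Integrable g)
    (hfc : AECompactlySupported f) (hgc : AECompactlySupported g)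
    (hf0 : ¬ f =ᵐ[volume] 0) (hg0 : ¬ g =ᵐ[volume] 0) :
    ¬ conv f g =ᵐ[volume] 0 := by
  intro hconv
  classical
  set e := (MeasurableEquiv.toLp 2 (Fin n → ℝ)).symm with he
  have hmp : MeasurePreserving e volume volume :=
    EuclideanSpace.volume_preserving_symm_measurableEquiv_toLp (Fin n)
  set F : EuclideanSpace ℝ (Fin n) → ℂ := fun x => f (e x) with hF
  set G : EuclideanSpace ℝ (Fin n) → ℂ := fun x => g (e x) with hG
  have hFint : Integrable F := by
    exact (hmp.integrable_comp_emb e.measurableEmbedding).2 hf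
  have hGint : Integrable G := by
    exact (hmp.integrable_comp_emb e.measurableEmbedding).2 hg
  have hF0 : ¬ F =ᵐ[volume] 0 := by
    intro h
    apply hf0
    have := (hmp.symm e).quasiMeasurePreserving.ae_eq h
    simp [Function.comp_def, hF, MeasurableEquiv.apply_symm_apply] at this
    exact this
  have hG0 : ¬ G =ᵐ[volume] 0 := by
    intro h
    apply hg0
    have := (hmp.symm e).quasiMeasurePreserving.ae_eq h
    simp [Function.comp_def, hG, MeasurableEquiv.apply_symm_apply] at this
    exact this
  have hGc : ∃ K : Set (EuclideanSpace ℝ (Fin n)), IsCompact K ∧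
      ∀ᵐ x ∂(volume), x ∉ K → G x = 0 := by
    obtain ⟨K, hK, hKae⟩ := hgc
    refine ⟨⇑e ⁻¹' K, ?_, ?_⟩
    · have : ⇑e ⁻¹' K = ⇑(EuclideanSpace.equiv (Fin n) ℝ) ⁻¹' K := rfl
      rw [this]
      exact (EuclideanSpace.equiv (Fin n) ℝ).toHomeomorph.isCompact_preimage.2 hK
    · exact hmp.quasiMeasurePreserving.ae hKae
  have hcv : (F ⋆[ContinuousLinearMap.mul ℂ ℂ] G) =ᵐ[volume] 0 := by
    have h1 : ∀ x, (F ⋆[ContinuousLinearMap.mul ℂ ℂ] G) x = conv f g (e x) := by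
      intro x
      show (∫ t, F t * G (x - t)) = ∫ t, f t * g (e x - t)
      rw [← hmp.integral_comp e.measurableEmbedding (fun t => f t * g (e x - t))]
      rfl
    have h2 := hmp.quasiMeasurePreserving.ae (p := fun y => conv f g y = 0) hconv
    filter_upwards [h2] with x hx
    rw [h1 x]
    exact hx
  exact ConvAux.master F G hFint hGint hGc hF0 hG0 hcv
end

section
/- Let a < b and let f ∈ L²(ℝ; ℂ) vanish almost everywhere outside [a,b] and satisfy ∫_ℝ f(t) dt = 0. Then Tf vanishes outside [a,b], Tf ∈ L²(ℝ; ℂ), and ‖Tf‖₂ ≤ ((b−a)/√2) · ‖f‖₂. -/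
open MeasureTheory

/-- The antiderivative operator `Tf(x) = ∫_{-∞}^x f(t) dt`. -/
noncomputable def T (f : ℝ → ℂ) : ℝ → ℂ := fun x => ∫ t in Set.Iic x, f t

lemma T_bound_aux_int (a b : ℝ) : ∫ x in a..b, (x - a) = (b - a) ^ 2 / 2 := by
  rw [intervalIntegral.integral_sub intervalIntegral.intervalIntegrable_id
    intervalIntegrable_const]
  simp [integral_id]
  ring

/-- If `f ∈ L²(ℝ)` vanishes a.e. outside `[a,b]` and has zero integral, then `Tf`
vanishes outside `[a,b]`, lies in `L²(ℝ)`, and `‖Tf‖₂ ≤ ((b-a)/√2)‖f‖₂`. -/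
theorem T_bound (a b : ℝ) (hab : a < b) (f : ℝ → ℂ)
    (hf : MemLp f 2 volume)
    (hsupp : ∀ᵐ x ∂(volume), x ∉ Set.Icc a b → f x = 0)
    (hint : ∫ t, f t = 0) :
    (∀ x ∉ Set.Icc a b, T f x = 0) ∧ MemLp (T f) 2 volume ∧
      eLpNorm (T f) 2 volume ≤
        ENNReal.ofReal ((b - a) / Real.sqrt 2) * eLpNorm f 2 volume := by
  -- f is integrable
  have hIcc : IntegrableOn f (Set.Icc a b) volume := by
    have : Fact (volume (Set.Icc a b) < ⊤) := ⟨by simp [Real.volume_Icc]⟩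
    exact (hf.restrict _).integrable one_le_two
  have heq : f =ᵐ[volume] (Set.Icc a b).indicator f := by
    filter_upwards [hsupp] with x hx
    by_cases h : x ∈ Set.Icc a b
    · simp [Set.indicator_of_mem h]
    · simp [Set.indicator_of_notMem h, hx h]
  have hfi : Integrable f volume :=
    (hIcc.integrable_indicator measurableSet_Icc).congr heq.symm
  -- continuity of T f
  have hTcont : Continuous (T f) := by
    have hTf : T f = fun x => (∫ t in a..x, f t) + T f a := by
      funext x
      have h := intervalIntegral.integral_Iic_sub_Iic (a := a) (b := x)
        hfi.integrableOn hfi.integrableOn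
      simp only [T]
      rw [← h]; ring
    rw [hTf]
    exact (hfi.continuous_primitive a).add continuous_const
  -- vanishing outside [a,b]
  have hzero : ∀ x ∉ Set.Icc a b, T f x = 0 := by
    intro x hx
    rcases lt_or_ge x a with hx1 | hx1
    · have hx1 : ¬ a ≤ x := not_le.mpr hx1
      have h0 : ∀ᵐ t ∂(volume.restrict (Set.Iic x)), f t = 0 := by
        filter_upwards [ae_restrict_of_ae hsupp, ae_restrict_mem measurableSet_Iic] with t ht h't
        exact ht fun hmem => hx1 (le_trans hmem.1 h't)
      simpa [T] using integral_eq_zero_of_ae h0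
    · have hx2 : b < x := lt_of_not_ge fun h => hx ⟨hx1, h⟩
      have h0 : ∫ t in Set.Ioi x, f t = 0 := by
        refine integral_eq_zero_of_ae ?_
        filter_upwards [ae_restrict_of_ae hsupp, ae_restrict_mem measurableSet_Ioi] with t ht h't
        exact ht fun hmem => absurd hmem.2 (not_le.mpr (hx2.trans h't))
      have h1 := integral_add_compl (s := Set.Iic x) measurableSet_Iic hfi
      rw [Set.compl_Iic, hint] at h1
      simpa [T, h0] using h1
  set N := eLpNorm f 2 volume with hNdef
  -- pointwise bound on Icc
  have hpt : ∀ x ∈ Set.Icc a b, (‖T f x‖₊ : ENNReal) ≤ N * ENNReal.ofReal (x - a) ^ (1/2:ℝ) := by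
    intro x hx
    have hTx : T f x = ∫ t in Set.Icc a x, f t := by
      have hcong : ∀ᵐ t ∂(volume.restrict (Set.Iic x)), f t = (Set.Icc a x).indicator f t := by
        filter_upwards [ae_restrict_of_ae hsupp, ae_restrict_mem measurableSet_Iic] with t ht h't
        by_cases hm : t ∈ Set.Icc a x
        · simp [Set.indicator_of_mem hm]
        · have hnb : t ∉ Set.Icc a b := fun hmem => hm ⟨hmem.1, h't⟩
          simp [Set.indicator_of_notMem hm, ht hnb]
      calc T f x = ∫ t in Set.Iic x, (Set.Icc a x).indicator f t := integral_congr_ae hcong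
        _ = ∫ t in Set.Iic x ∩ Set.Icc a x, f t := setIntegral_indicator measurableSet_Icc
        _ = ∫ t in Set.Icc a x, f t := by
            rw [Set.inter_eq_right.mpr (fun t ht => ht.2)]
    rw [hTx]
    calc (‖∫ t in Set.Icc a x, f t‖₊ : ENNReal)
        ≤ ∫⁻ t in Set.Icc a x, ‖f t‖₊ := enorm_integral_le_lintegral_enorm _
      _ = eLpNorm f 1 (volume.restrict (Set.Icc a x)) := (eLpNorm_one_eq_lintegral_enorm (f := f) (μ := volume.restrict (Set.Icc a x))).symm
      _ ≤ eLpNorm f 2 (volume.restrict (Set.Icc a x)) *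
            (volume.restrict (Set.Icc a x)) Set.univ ^
              (1/(1:ENNReal).toReal - 1/(2:ENNReal).toReal) :=
          eLpNorm_le_eLpNorm_mul_rpow_measure_univ one_le_two hf.1.restrict
      _ ≤ N * ENNReal.ofReal (x - a) ^ (1/2:ℝ) := by
          have he : 1/(1:ENNReal).toReal - 1/(2:ENNReal).toReal = (1/2:ℝ) := by norm_num
          rw [Measure.restrict_apply_univ, Real.volume_Icc, he]
          exact mul_le_mul_left (eLpNorm_mono_measure f Measure.restrict_le_self) _
  have hNtop : N ^ (2:ℝ) ≠ ⊤ := ENNReal.rpow_ne_top_of_nonneg (by norm_num) hf.2.ne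
  have hsq : ∫⁻ x, (‖T f x‖₊ : ENNReal) ^ (2:ℝ) ≤ N ^ (2:ℝ) * ENNReal.ofReal ((b-a)^2/2) := by
    have hind : (fun x => (‖T f x‖₊ : ENNReal) ^ (2:ℝ)) =
        (Set.Icc a b).indicator fun x => (‖T f x‖₊ : ENNReal) ^ (2:ℝ) := by
      funext x
      by_cases hm : x ∈ Set.Icc a b
      · simp [Set.indicator_of_mem hm]
      · simp [Set.indicator_of_notMem hm, hzero x hm,
          ENNReal.zero_rpow_of_pos (by norm_num : (0:ℝ) < 2)]
    rw [hind, lintegral_indicator measurableSet_Icc _]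
    calc ∫⁻ x in Set.Icc a b, (‖T f x‖₊ : ENNReal) ^ (2:ℝ)
        ≤ ∫⁻ x in Set.Icc a b, N ^ (2:ℝ) * ENNReal.ofReal (x - a) := by
          refine setLIntegral_mono' measurableSet_Icc fun x hx => ?_
          calc (‖T f x‖₊ : ENNReal) ^ (2:ℝ)
              ≤ (N * ENNReal.ofReal (x-a) ^ (1/2:ℝ)) ^ (2:ℝ) :=
                ENNReal.rpow_le_rpow (hpt x hx) (by norm_num)
            _ = N ^ (2:ℝ) * ENNReal.ofReal (x-a) := by
                rw [ENNReal.mul_rpow_of_nonneg _ _ (by norm_num), ← ENNReal.rpow_mul]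
                norm_num
      _ = N ^ (2:ℝ) * ∫⁻ x in Set.Icc a b, ENNReal.ofReal (x - a) :=
          lintegral_const_mul' _ _ hNtop
      _ = N ^ (2:ℝ) * ENNReal.ofReal ((b-a)^2/2) := by
          congr 1
          rw [← ofReal_integral_eq_lintegral_ofReal]
          · congr 1
            rw [MeasureTheory.integral_Icc_eq_integral_Ioc,
              ← intervalIntegral.integral_of_le hab.le, T_bound_aux_int]
          · exact (continuous_id.sub continuous_const).integrableOn_Icc.integrable
          · filter_upwards [ae_restrict_mem measurableSet_Icc] with x hx
            simp only [Pi.zero_apply]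
            linarith [hx.1]
  have heLp : eLpNorm (T f) 2 volume ≤ ENNReal.ofReal ((b - a)/Real.sqrt 2) * N := by
    rw [eLpNorm_eq_lintegral_rpow_enorm_toReal two_ne_zero ENNReal.ofNat_ne_top]
    have h2 : ((2:ENNReal)).toReal = 2 := by norm_num
    rw [h2]
    calc (∫⁻ x, (‖T f x‖₊ : ENNReal) ^ (2:ℝ)) ^ (1/(2:ℝ))
        ≤ (N ^ (2:ℝ) * ENNReal.ofReal ((b-a)^2/2)) ^ (1/(2:ℝ)) :=
          ENNReal.rpow_le_rpow hsq (by norm_num)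
      _ = N * ENNReal.ofReal ((b-a)^2/2) ^ (1/(2:ℝ)) := by
          rw [ENNReal.mul_rpow_of_nonneg _ _ (by norm_num), ← ENNReal.rpow_mul]
          norm_num
      _ = ENNReal.ofReal ((b - a)/Real.sqrt 2) * N := by
          rw [ENNReal.ofReal_rpow_of_nonneg (by positivity) (by norm_num), mul_comm]
          congr 1
          rw [← Real.sqrt_eq_rpow, Real.sqrt_div (by positivity),
            Real.sqrt_sq (by linarith)]
  exact ⟨hzero, ⟨hTcont.aestronglyMeasurable,
    lt_of_le_of_lt heLp (ENNReal.mul_lt_top ENNReal.ofReal_lt_top hf.2)⟩, heLp⟩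
end
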